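/- In dimension $d$, the number of combinatorially distinct basic cross-flips is exactly $2^{d+1}-1$, i.e., the equivalence classes of diamond complexes $\Diamond(\Gamma_I)$ for nonempty $I\subseteq\{0,\ldots,d+1\}$ with $I\ne\{0,\ldots,d+1\}$ under simplicial isomorphism are in bijection with the nonempty subsets of $\{0,\ldots,d\}$. -/

import Mathlib

namespace Paper

/-- Ambient vertex type in dimension `d`: original vertices `0,…,d+1` (left)
and new vertices `v_0,…,v_d` (right). -/
abbrev V (d : ℕ) := Sum (Fin (d+2)) (Fin (d+1))

def origV (d m : ℕ) : V d := Sum.inl ⟨m % (d+2), Nat.mod_lt m (by omega)⟩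
def newV (d m : ℕ) : V d := Sum.inr ⟨m % (d+1), Nat.mod_lt m (by omega)⟩

variable {W : Type*} [DecidableEq W] {W' : Type*} [DecidableEq W']

def IsComplex (Δ : Set (Finset W)) : Prop := ∀ F ∈ Δ, ∀ G, G ⊆ F → G ∈ Δ

def isFacet (Δ : Set (Finset W)) (F : Finset W) : Prop :=
  F ∈ Δ ∧ ∀ G ∈ Δ, F ⊆ G → G = F

def simplexOn (A : Finset W) : Set (Finset W) := {F | F ⊆ A}

def bdrySimplex (A : Finset W) : Set (Finset W) := {F | F ⊂ A}

def joinC (Δ Γ : Set (Finset W)) : Set (Finset W) := {s | ∃ a ∈ Δ, ∃ b ∈ Γ, s = a ∪ b}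

def lkC (Δ : Set (Finset W)) (F : Finset W) : Set (Finset W) :=
  {G | Disjoint F G ∧ F ∪ G ∈ Δ}

def delFace (Δ : Set (Finset W)) (F : Finset W) : Set (Finset W) := {G ∈ Δ | ¬ F ⊆ G}

/-- Stellar subdivision at `F` with new vertex `v`. -/
def sdC (v : W) (F : Finset W) (Δ : Set (Finset W)) : Set (Finset W) :=
  delFace Δ F ∪ joinC (simplexOn {v}) (joinC (bdrySimplex F) (lkC Δ F))

/-- Deletion of a subcomplex: the complex generated by the facets of `Δ`
that are not facets of `Γ`. -/
def delSub (Δ Γ : Set (Finset W)) : Set (Finset W) :=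
  {G | ∃ F, isFacet Δ F ∧ ¬ isFacet Γ F ∧ G ⊆ F}

def IsInduced (Γ Δ : Set (Finset W)) : Prop :=
  Γ ⊆ Δ ∧ ∀ F ∈ Δ, (∀ v ∈ F, ({v} : Finset W) ∈ Γ) → F ∈ Γ

/-- Simplicial isomorphism (via a permutation of the ambient vertex set). -/
def IsoC (Δ Γ : Set (Finset W)) : Prop :=
  ∃ e : Equiv.Perm W, ∀ F : Finset W, F ∈ Δ ↔ F.image (⇑e) ∈ Γ

def mapC (f : W → W') (Δ : Set (Finset W)) : Set (Finset W') := {F | ∃ G ∈ Δ, F = G.image f}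

/-- Number of faces of cardinality `i` (i.e. dimension `i-1`). -/
noncomputable def fnum (Δ : Set (Finset W)) (i : ℕ) : ℕ := {F | F ∈ Δ ∧ F.card = i}.ncard

/-- `h`-numbers of a `d`-dimensional complex. -/
noncomputable def hnum (d : ℕ) (Δ : Set (Finset W)) (j : ℕ) : ℤ :=
  ∑ i ∈ Finset.range (j+1),
    (-1 : ℤ)^(j-i) * ((d+1-i).choose (d+1-j) : ℤ) * (fnum Δ i : ℤ)

/-- `R` is the restriction face of the `i`-th facet of the ordering `L`. -/
def IsRestriction (L : List (Finset W)) (i : ℕ) (R : Finset W) : Prop :=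
  R ⊆ L.getD i ∅ ∧ (∀ j < i, ¬ R ⊆ L.getD j ∅) ∧
    ∀ G ⊆ L.getD i ∅, (∀ j < i, ¬ G ⊆ L.getD j ∅) → R ⊆ G

def IsShelling (Δ : Set (Finset W)) (L : List (Finset W)) : Prop :=
  L.Nodup ∧ (∀ F, F ∈ L ↔ isFacet Δ F) ∧ ∀ i < L.length, ∃ R, IsRestriction L i R

def Shellable (Δ : Set (Finset W)) : Prop := ∃ L, IsShelling Δ L

def IsRelRestriction (Sg : Set (Finset W)) (L : List (Finset W)) (i : ℕ) (R : Finset W) : Prop :=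
  R ⊆ L.getD i ∅ ∧ R ∉ Sg ∧ (∀ j < i, ¬ R ⊆ L.getD j ∅) ∧
    ∀ G ⊆ L.getD i ∅, G ∉ Sg → (∀ j < i, ¬ G ⊆ L.getD j ∅) → R ⊆ G

/-- Shelling of the relative complex `(Δ, Sg)`. -/
def IsRelShelling (Δ Sg : Set (Finset W)) (L : List (Finset W)) : Prop :=
  L.Nodup ∧ (∀ F, F ∈ L ↔ (isFacet Δ F ∧ F ∉ Sg)) ∧
    ∀ i < L.length, ∃ R, IsRelRestriction Sg L i R

/-- The facet of the `(d+1)`-simplex on `{0,…,d+1}` omitting vertex `i`. -/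
def Gface (d i : ℕ) : Finset (V d) :=
  ((Finset.range (d+2)).filter (fun j => j ≠ i)).image (origV d)

def GammaC (d i : ℕ) : Set (Finset (V d)) := simplexOn (Gface d i)

def GammaU (d : ℕ) (I : Finset ℕ) : Set (Finset (V d)) := {F | ∃ i ∈ I, F ⊆ Gface d i}

/-- The face `F_i = {i+1,…,d+1}` subdivided by the diamond operation. -/
def Fsub (d i : ℕ) : Finset (V d) := (Finset.Ioc i (d+1)).image (origV d)

/-- The diamond operation: successive stellar subdivisions at `F_0, F_1, …, F_d`
with new vertices `v_0,…,v_d` (subdivision at a non-face has no effect). -/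
def Diam (d : ℕ) (Δ : Set (Finset (V d))) : Set (Finset (V d)) :=
  (List.range (d+1)).foldl (fun Γ i => sdC (newV d i) (Fsub d i) Γ) Δ

def DiamU (d : ℕ) (I : Finset ℕ) : Set (Finset (V d)) := Diam d (GammaU d I)

/-- Boundary complex of the cross-polytope on the vertex pairs `{j, v_j}`, `j ∈ S`. -/
def crossN (d : ℕ) (S : Finset ℕ) : Set (Finset (V d)) :=
  {F | (∀ x ∈ F, ∃ j ∈ S, x = origV d j ∨ x = newV d j) ∧
       ∀ j ∈ S, ¬ (origV d j ∈ F ∧ newV d j ∈ F)}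

/-- Boundary complex: generated by the faces of cardinality `n` contained in
exactly one facet. -/
def bdryC (n : ℕ) (Δ : Set (Finset W)) : Set (Finset W) :=
  {G | ∃ F, G ⊆ F ∧ F ∈ Δ ∧ F.card = n ∧ ∃! H, isFacet Δ H ∧ F ⊆ H}

/-- Positions in `P` at which `G` differs from the reference facet `F0`. -/
def diffSet (d : ℕ) (P : Finset ℕ) (F0 G : Finset (V d)) : Finset ℕ :=
  P.filter (fun j => decide (origV d j ∈ G) ≠ decide (origV d j ∈ F0))

/-- Degree lexicographic comparison of characteristic (difference) sets. -/
def dlexLT (D D' : Finset ℕ) : Prop :=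
  D.card < D'.card ∨
    (D.card = D'.card ∧ ∃ m, m ∉ D ∧ m ∈ D' ∧ ∀ j < m, (j ∈ D ↔ j ∈ D'))

/-- `L` lists the facets of `Δ` in degree lexicographic order w.r.t. `F0`. -/
def IsDegLexOrder (d : ℕ) (P : Finset ℕ) (Δ : Set (Finset (V d)))
    (F0 : Finset (V d)) (L : List (Finset (V d))) : Prop :=
  L.Nodup ∧ (∀ F, F ∈ L ↔ isFacet Δ F) ∧
    L.Pairwise (fun G G' => dlexLT (diffSet d P F0 G) (diffSet d P F0 G'))

/-- Vertices of `F` sitting at the positions in `D`. -/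
def posVerts (d : ℕ) (F : Finset (V d)) (D : Finset ℕ) : Finset (V d) :=
  F.filter (fun x => ∃ j ∈ D, x = origV d j ∨ x = newV d j)

def IsoN (Δ Γ : Set (Finset ℕ)) : Prop :=
  ∃ e : Equiv.Perm ℕ, ∀ F : Finset ℕ, F ∈ Δ ↔ F.image (⇑e) ∈ Γ

def StellarMove (Δ Γ : Set (Finset ℕ)) : Prop :=
  ∃ (F : Finset ℕ) (v : ℕ), F ∈ Δ ∧ F ≠ ∅ ∧ (∀ G ∈ Δ, v ∉ G) ∧ Γ = sdC v F Δ

/-- PL homeomorphism of simplicial complexes, encoded via Alexander's theorem as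
stellar equivalence: the equivalence relation generated by stellar subdivisions
(and their inverses, the welds) together with simplicial isomorphisms. -/
def PLHomeo (Δ Γ : Set (Finset ℕ)) : Prop :=
  Relation.EqvGen (fun A B => StellarMove A B ∨ IsoN A B) Δ Γ

def encV (d : ℕ) : V d → ℕ := Sum.elim (fun j => 2 * j.val) (fun j => 2 * j.val + 1)

def toN (d : ℕ) (Δ : Set (Finset (V d))) : Set (Finset ℕ) := mapC (encV d) Δ

def ballN (c : ℕ) : Set (Finset ℕ) := {F | F ⊆ Finset.range c}

def sphereN (c : ℕ) : Set (Finset ℕ) := {F | F ⊂ Finset.range (c+1)}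

/-- `Δ` is a combinatorial ball of dimension `c-1` (a `(c-1)`-simplex has `c` vertices). -/
def IsCombBall (d c : ℕ) (Δ : Set (Finset (V d))) : Prop := PLHomeo (toN d Δ) (ballN c)

/-- `Δ` is a combinatorial sphere of dimension `c-1`. -/
def IsCombSphere (d c : ℕ) (Δ : Set (Finset (V d))) : Prop := PLHomeo (toN d Δ) (sphereN c)

def ConnC (Δ : Set (Finset W)) : Prop :=
  ∀ u v : W, ({u} : Finset W) ∈ Δ → ({v} : Finset W) ∈ Δ →
    Relation.ReflTransGen (fun a b => ({a, b} : Finset W) ∈ Δ) u v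

/-- Combinatorial `d`-manifold (possibly with boundary): connected, pure, and all
links of nonempty faces are combinatorial balls or spheres of dimension `d - |F|`. -/
def IsCombManifold (d : ℕ) (Δ : Set (Finset (V d))) : Prop :=
  IsComplex Δ ∧ (∅ : Finset (V d)) ∈ Δ ∧ ConnC Δ ∧
  (∀ F ∈ Δ, ∃ G, isFacet Δ G ∧ F ⊆ G ∧ G.card = d+1) ∧
  ∀ F ∈ Δ, F ≠ (∅ : Finset (V d)) →
    (IsCombBall d (d+1-F.card) (lkC Δ F) ∨ IsCombSphere d (d+1-F.card) (lkC Δ F))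

def liftV (d : ℕ) : V d → V (d+1) := Sum.map Fin.castSucc Fin.castSucc

/-- The relabeling `π : i ↦ i+1`, `v_i ↦ v_{i+1}`. -/
def piV (d : ℕ) : V d → V (d+1) := Sum.map Fin.succ Fin.succ

/-- The relabeling `ρ : i ↦ i-1`, `v_i ↦ v_{i-1}` (indices mod `d+1`). -/
def rhoV (d : ℕ) : V d → V d := fun x =>
  match x with
  | Sum.inl j => origV d ((j.val + d) % (d+1))
  | Sum.inr j => newV d ((j.val + d) % (d+1))

/-- `ψ` swaps the vertices `d` and `v_d`. -/
def psiV (d : ℕ) : V d → V d := fun x => Equiv.swap (origV d d) (newV d d) x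

def sigmaV (d : ℕ) : V d → V d := psiV d ∘ rhoV d

/-- `Δ` is (isomorphic to) the boundary complex of the `(d+1)`-dimensional
cross-polytope. -/
def IsCrossBdry (d : ℕ) (Δ : Set (Finset W)) : Prop :=
  ∃ f : Fin (d+1) × Bool → W, Function.Injective f ∧
    Δ = {F | (∀ v ∈ F, ∃ p, v = f p) ∧
             ∀ j : Fin (d+1), ¬ (f (j, true) ∈ F ∧ f (j, false) ∈ F)}

/-- `Sg` is a connected sum of `Δ` and `Γ`: they meet exactly in the full simplex
on a common facet `F`, which is removed. -/
def IsConnSum (Δ Γ Sg : Set (Finset W)) : Prop :=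
  ∃ F : Finset W, isFacet Δ F ∧ isFacet Γ F ∧ Δ ∩ Γ = simplexOn F ∧ Sg = (Δ ∪ Γ) \ {F}

/-- Connected sum of `m+1` copies of the boundary of the `(d+1)`-cross-polytope. -/
def IsCrossStacked (d : ℕ) : ℕ → Set (Finset W) → Prop
  | 0, Δ => IsCrossBdry d Δ
  | (m+1), Δ => ∃ A B : Set (Finset W), IsCrossStacked d m A ∧ IsCrossBdry d B ∧ IsConnSum A B Δ

/-- The initial facet of the block `Diam(Γ_{iℓ})` (for block index `ℓ ≥ 1`;
block `0` uses the facet `G0` meeting the boundary). -/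
def initFacet (d i1 iℓ : ℕ) (G0 : Finset (V d)) (ℓ : ℕ) : Finset (V d) :=
  if ℓ = 0 then G0
  else ((Finset.range iℓ).image (origV d)) ∪ {newV d iℓ} ∪
       ((Finset.Ioo iℓ (max i1 iℓ)).image (origV d)) ∪
       ((Finset.Icc (max i1 iℓ) d).image (newV d))



/-! ### Auxiliary development for Statement 3 -/

section Stmt3Aux

open Finset

variable {d : ℕ}

/-! #### Vertex arithmetic -/

lemma origV_eq' {m : ℕ} (h : m < d+2) : origV d m = Sum.inl ⟨m, h⟩ := by
  unfold origV; congr 1; exact Fin.ext (Nat.mod_eq_of_lt h)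

lemma newV_eq' {m : ℕ} (h : m < d+1) : newV d m = Sum.inr ⟨m, h⟩ := by
  unfold newV; congr 1; exact Fin.ext (Nat.mod_eq_of_lt h)

lemma origV_ne_newV (a b : ℕ) : origV d a ≠ newV d b := by simp [origV, newV]

lemma origV_inj {a b : ℕ} (ha : a < d+2) (hb : b < d+2) (h : origV d a = origV d b) : a = b := by
  rw [origV_eq' ha, origV_eq' hb] at h
  simpa using h

lemma newV_inj {a b : ℕ} (ha : a < d+1) (hb : b < d+1) (h : newV d a = newV d b) : a = b := by
  rw [newV_eq' ha, newV_eq' hb] at h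
  simpa using h

lemma origV_mem_image {a : ℕ} {s : Finset ℕ} (ha : a < d+2) (hs : ∀ m ∈ s, m < d+2) :
    origV d a ∈ s.image (origV d) ↔ a ∈ s := by
  simp only [mem_image]
  constructor
  · rintro ⟨m, hm, h⟩
    rwa [← origV_inj (hs m hm) ha h]
  · exact fun h => ⟨a, h, rfl⟩

lemma newV_not_mem_image {a : ℕ} {s : Finset ℕ} : newV d a ∉ s.image (origV d) := by
  intro h
  obtain ⟨m, -, hm⟩ := Finset.mem_image.mp h
  exact origV_ne_newV m a hm

/-! #### The pattern and remainder faces -/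

def patF (d k : ℕ) (ε : ℕ → Bool) : Finset (V d) :=
  (Finset.range k).image (fun j => if ε j then newV d j else origV d j)

lemma patF_congr {k : ℕ} {ε ε' : ℕ → Bool} (h : ∀ j < k, ε j = ε' j) :
    patF d k ε = patF d k ε' := by
  unfold patF
  apply Finset.image_congr
  intro j hj
  simp only [coe_range, Set.mem_Iio] at hj
  simp only [h j hj]

lemma patF_succ (k : ℕ) (ε : ℕ → Bool) :
    patF d (k+1) ε = insert (if ε k then newV d k else origV d k) (patF d k ε) := by
  unfold patF
  rw [Finset.range_add_one, Finset.image_insert]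

lemma patF_succ_true {k : ℕ} {ε : ℕ → Bool} (h : ε k = true) :
    patF d (k+1) ε = insert (newV d k) (patF d k ε) := by
  rw [patF_succ, if_pos h]

lemma patF_succ_false {k : ℕ} {ε : ℕ → Bool} (h : ε k = false) :
    patF d (k+1) ε = insert (origV d k) (patF d k ε) := by
  rw [patF_succ, if_neg (by simp [h])]

def setAt (k : ℕ) (b : Bool) (ε : ℕ → Bool) : ℕ → Bool := fun j => if j = k then b else ε j

lemma setAt_ne {k : ℕ} (b : Bool) (ε : ℕ → Bool) {j : ℕ} (h : j ≠ k) : setAt k b ε j = ε j :=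
  if_neg h

lemma setAt_self (k : ℕ) (b : Bool) (ε : ℕ → Bool) : setAt k b ε k = b := if_pos rfl

lemma mem_patF_cases {x : V d} {k : ℕ} {ε : ℕ → Bool} (h : x ∈ patF d k ε) :
    ∃ j, j < k ∧ ((ε j = true ∧ x = newV d j) ∨ (ε j = false ∧ x = origV d j)) := by
  unfold patF at h
  obtain ⟨j, hj, hx⟩ := Finset.mem_image.mp h
  rw [mem_range] at hj
  by_cases hε : ε j = true
  · rw [if_pos hε] at hx
    exact ⟨j, hj, Or.inl ⟨hε, hx.symm⟩⟩
  · rw [if_neg hε] at hx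
    exact ⟨j, hj, Or.inr ⟨by simpa using hε, hx.symm⟩⟩

lemma origV_mem_patF {a k : ℕ} {ε : ℕ → Bool} (ha : a < d+2) (hk : k ≤ d+1) :
    origV d a ∈ patF d k ε ↔ a < k ∧ ε a = false := by
  constructor
  · intro h
    obtain ⟨j, hj, hc⟩ := mem_patF_cases h
    rcases hc with ⟨_, he⟩ | ⟨hf, he⟩
    · exact absurd he (origV_ne_newV a j)
    · have := origV_inj ha (by omega) he
      subst this
      exact ⟨hj, hf⟩
  · rintro ⟨h1, h2⟩
    unfold patF
    exact Finset.mem_image.mpr ⟨a, mem_range.mpr h1, by simp [h2]⟩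

lemma newV_mem_patF {a k : ℕ} {ε : ℕ → Bool} (ha : a < d+1) (hk : k ≤ d+1) :
    newV d a ∈ patF d k ε ↔ a < k ∧ ε a = true := by
  constructor
  · intro h
    obtain ⟨j, hj, hc⟩ := mem_patF_cases h
    rcases hc with ⟨ht, he⟩ | ⟨_, he⟩
    · have := newV_inj ha (by omega) he
      subst this
      exact ⟨hj, ht⟩
    · exact absurd he.symm (origV_ne_newV j a)
  · rintro ⟨h1, h2⟩
    unfold patF
    exact Finset.mem_image.mpr ⟨a, mem_range.mpr h1, by simp [h2]⟩

def remF (d k x : ℕ) : Finset (V d) := ((Finset.Icc k (d+1)).erase x).image (origV d)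

lemma remF_self {k : ℕ} : remF d k k = Fsub d k := by
  unfold remF Fsub
  congr 1
  ext m
  simp only [mem_erase, mem_Icc, mem_Ioc]
  omega

lemma remF_step {k x : ℕ} (hk : k ≤ d+1) (hx : k < x) :
    remF d k x = insert (origV d k) (remF d (k+1) x) := by
  unfold remF
  rw [← Finset.image_insert]
  congr 1
  ext m
  simp only [mem_insert, mem_erase, mem_Icc]
  omega

lemma origV_mem_remF {a k x : ℕ} (ha : a < d+2) :
    origV d a ∈ remF d k x ↔ a ≠ x ∧ k ≤ a ∧ a ≤ d+1 := by
  unfold remF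
  rw [origV_mem_image ha (by intro m hm; rw [mem_erase, mem_Icc] at hm; omega)]
  simp only [mem_erase, mem_Icc]

lemma mem_remF_cases {z : V d} {k x : ℕ} (h : z ∈ remF d k x) :
    ∃ m, m ≠ x ∧ k ≤ m ∧ m ≤ d+1 ∧ z = origV d m := by
  unfold remF at h
  obtain ⟨m, hm, rfl⟩ := Finset.mem_image.mp h
  rw [mem_erase, mem_Icc] at hm
  exact ⟨m, hm.1, hm.2.1, hm.2.2, rfl⟩

lemma origV_mem_Fsub {a k : ℕ} (ha : a < d+2) :
    origV d a ∈ Fsub d k ↔ k < a ∧ a ≤ d+1 := by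
  unfold Fsub
  rw [origV_mem_image ha (by intro m hm; rw [mem_Ioc] at hm; omega)]
  simp [mem_Ioc]

lemma mem_Fsub_cases {z : V d} {k : ℕ} (h : z ∈ Fsub d k) :
    ∃ m, k < m ∧ m ≤ d+1 ∧ z = origV d m := by
  unfold Fsub at h
  obtain ⟨m, hm, rfl⟩ := Finset.mem_image.mp h
  rw [mem_Ioc] at hm
  exact ⟨m, hm.1, hm.2, rfl⟩

lemma origV_mem_Gface {a i : ℕ} (ha : a < d+2) :
    origV d a ∈ Gface d i ↔ a ≠ i := by
  unfold Gface
  rw [origV_mem_image ha (by intro m hm; rw [mem_filter, mem_range] at hm; omega)]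
  simp only [mem_filter, mem_range]
  exact ⟨fun h => h.2, fun h => ⟨ha, h⟩⟩

lemma mem_Gface_cases {z : V d} {i : ℕ} (h : z ∈ Gface d i) :
    ∃ m, m < d+2 ∧ m ≠ i ∧ z = origV d m := by
  unfold Gface at h
  obtain ⟨m, hm, rfl⟩ := Finset.mem_image.mp h
  rw [mem_filter, mem_range] at hm
  exact ⟨m, hm.1, hm.2, rfl⟩

lemma remF_subset_Fsub {k x : ℕ} : remF d (k+1) x ⊆ Fsub d k := by
  unfold remF Fsub
  apply Finset.image_subset_image
  intro m hm
  rw [mem_erase, mem_Icc] at hm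
  rw [mem_Ioc]
  omega

lemma disjoint_Fsub_patF {k : ℕ} {ε : ℕ → Bool} (hk : k ≤ d+1) :
    Disjoint (Fsub d k) (patF d k ε) := by
  rw [Finset.disjoint_left]
  intro z hz hp
  obtain ⟨m, hm1, hm2, rfl⟩ := mem_Fsub_cases hz
  obtain ⟨j, hj, hc⟩ := mem_patF_cases hp
  rcases hc with ⟨_, he⟩ | ⟨_, he⟩
  · exact origV_ne_newV m j he
  · have := origV_inj (by omega) (by omega) he
    omega

/-! #### The intermediate complexes -/

def StC (d i k : ℕ) : Set (Finset (V d)) :=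
  {F | ∃ ε x, (∀ j < i, ε j = false) ∧ ε i = true ∧ x ∈ Finset.Icc k (d+1) ∧
    F ⊆ patF d k ε ∪ remF d k x}

def stepD (d : ℕ) : Set (Finset (V d)) → ℕ → Set (Finset (V d)) :=
  fun Γ i => sdC (newV d i) (Fsub d i) Γ

lemma Diam_eq_fold (Δ : Set (Finset (V d))) :
    Diam d Δ = (List.range (d+1)).foldl (stepD d) Δ := rfl

lemma sdC_eq_self {W : Type*} [DecidableEq W] {v : W} {F : Finset W} {Δ : Set (Finset W)}
    (h : ∀ G ∈ Δ, ¬ F ⊆ G) : sdC v F Δ = Δ := by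
  have hlk : lkC Δ F = ∅ := by
    ext G
    simp only [lkC, Set.mem_setOf_eq, Set.mem_empty_iff_false, iff_false, not_and]
    intro _ hm
    exact h _ hm Finset.subset_union_left
  have hdel : delFace Δ F = Δ := by
    ext G
    simp only [delFace, Set.mem_setOf_eq]
    exact ⟨fun h' => h'.1, fun h' => ⟨h', h _ h'⟩⟩
  unfold sdC
  rw [hlk, hdel]
  have h1 : joinC (bdrySimplex F) (∅ : Set (Finset W)) = ∅ := by
    ext G; simp [joinC]
  rw [h1]
  have h2 : joinC (simplexOn {v}) (∅ : Set (Finset W)) = ∅ := by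
    ext G; simp [joinC]
  rw [h2, Set.union_empty]

lemma step_Gamma_lt {i k : ℕ} (hk : k < i) (hi : i ≤ d+1) :
    stepD d (GammaC d i) k = GammaC d i := by
  apply sdC_eq_self
  intro G hG hsub
  have hG' : G ⊆ Gface d i := hG
  have h1 : origV d i ∈ Fsub d k := (origV_mem_Fsub (by omega)).2 ⟨hk, hi⟩
  have h2 := hG' (hsub h1)
  rw [origV_mem_Gface (by omega)] at h2
  exact h2 rfl

lemma step_Gamma_eq {i : ℕ} (hi : i ≤ d) :
    stepD d (GammaC d i) i = StC d i (i+1) := by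
  ext G
  simp only [stepD, sdC, Set.mem_union]
  constructor
  · rintro (⟨hG, hnF⟩ | ⟨a, ha, bg, ⟨b, hb, g, ⟨hgd, hgm⟩, rfl⟩, rfl⟩)
    · have hG' : G ⊆ Gface d i := hG
      obtain ⟨y, hyF, hyG⟩ := Finset.not_subset.mp hnF
      obtain ⟨m, hm1, hm2, rfl⟩ := mem_Fsub_cases hyF
      refine ⟨setAt i true (fun _ => false), m, ?_, setAt_self _ _ _,
        by rw [mem_Icc]; omega, ?_⟩
      · intro j hj; rw [setAt_ne _ _ (by omega : j ≠ i)]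
      · intro z hz
        obtain ⟨m', hm'1, hm'2, rfl⟩ := mem_Gface_cases (hG' hz)
        by_cases hcase : m' < i
        · apply Finset.mem_union_left
          rw [origV_mem_patF (by omega) (by omega)]
          exact ⟨by omega, by rw [setAt_ne _ _ (by omega : m' ≠ i)]⟩
        · apply Finset.mem_union_right
          have hne : m' ≠ m := by rintro rfl; exact hyG hz
          rw [origV_mem_remF (by omega)]
          exact ⟨hne, by omega, by omega⟩
    · have hb' : b ⊂ Fsub d i := hb
      have hgm' : Fsub d i ∪ g ⊆ Gface d i := hgm
      obtain ⟨y, hyF, hyb⟩ := Finset.exists_of_ssubset hb'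
      obtain ⟨m, hm1, hm2, rfl⟩ := mem_Fsub_cases hyF
      refine ⟨setAt i true (fun _ => false), m, ?_, setAt_self _ _ _,
        by rw [mem_Icc]; omega, ?_⟩
      · intro j hj; rw [setAt_ne _ _ (by omega : j ≠ i)]
      · intro z hz
        rcases Finset.mem_union.mp hz with hza | hzbg
        · have hz' : z = newV d i := Finset.mem_singleton.mp (ha hza)
          subst hz'
          apply Finset.mem_union_left
          rw [newV_mem_patF (by omega) (by omega)]
          exact ⟨by omega, setAt_self _ _ _⟩
        · rcases Finset.mem_union.mp hzbg with hzb | hzg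
          · obtain ⟨m', hm'1, hm'2, rfl⟩ := mem_Fsub_cases (hb'.subset hzb)
            have hne : m' ≠ m := by rintro rfl; exact hyb hzb
            apply Finset.mem_union_right
            rw [origV_mem_remF (by omega)]
            exact ⟨hne, by omega, hm'2⟩
          · obtain ⟨m', hm'1, hm'2, rfl⟩ := mem_Gface_cases (hgm' (Finset.mem_union_right _ hzg))
            have hlt : m' < i := by
              by_contra hcon
              have hmem : origV d m' ∈ Fsub d i := (origV_mem_Fsub (by omega)).2 ⟨by omega, by omega⟩
              exact Finset.disjoint_left.mp hgd hmem hzg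
            apply Finset.mem_union_left
            rw [origV_mem_patF (by omega) (by omega)]
            exact ⟨by omega, by rw [setAt_ne _ _ (by omega : m' ≠ i)]⟩
  · rintro ⟨ε, x, hε1, hε2, hx, hsub⟩
    rw [mem_Icc] at hx
    right
    refine ⟨G ∩ {newV d i}, Finset.inter_subset_right,
      (G ∩ remF d (i+1) x) ∪ (G ∩ patF d i ε),
      ⟨G ∩ remF d (i+1) x, ?_, G ∩ patF d i ε, ⟨?_, ?_⟩, rfl⟩, ?_⟩
    · show G ∩ remF d (i+1) x ⊂ Fsub d i
      rw [Finset.ssubset_def]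
      constructor
      · exact Finset.inter_subset_right.trans remF_subset_Fsub
      · intro hcon
        have h1 : origV d x ∈ Fsub d i := (origV_mem_Fsub (by omega)).2 ⟨by omega, by omega⟩
        have h2 := hcon h1
        rw [Finset.mem_inter, origV_mem_remF (by omega)] at h2
        exact h2.2.1 rfl
    · exact (disjoint_Fsub_patF (by omega)).mono_right Finset.inter_subset_right
    · show Fsub d i ∪ (G ∩ patF d i ε) ⊆ Gface d i
      apply Finset.union_subset
      · intro z hz
        obtain ⟨m, hm1, hm2, rfl⟩ := mem_Fsub_cases hz
        exact (origV_mem_Gface (by omega)).2 (by omega)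
      · intro z hz
        obtain ⟨j, hj, hc⟩ := mem_patF_cases (Finset.mem_inter.mp hz).2
        rcases hc with ⟨ht, rfl⟩ | ⟨_, rfl⟩
        · rw [hε1 j hj] at ht; cases ht
        · exact (origV_mem_Gface (by omega)).2 (by omega)
    · apply Finset.Subset.antisymm
      · intro z hz
        rcases Finset.mem_union.mp (hsub hz) with hp | hr
        · rw [patF_succ_true hε2] at hp
          rcases Finset.mem_insert.mp hp with rfl | hp'
          · exact Finset.mem_union_left _ (Finset.mem_inter.mpr ⟨hz, Finset.mem_singleton_self _⟩)
          · exact Finset.mem_union_right _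
              (Finset.mem_union_right _ (Finset.mem_inter.mpr ⟨hz, hp'⟩))
        · exact Finset.mem_union_right _
            (Finset.mem_union_left _ (Finset.mem_inter.mpr ⟨hz, hr⟩))
      · exact Finset.union_subset Finset.inter_subset_left
          (Finset.union_subset Finset.inter_subset_left Finset.inter_subset_left)

lemma step_StC {i k : ℕ} (hik : i < k) (hk : k ≤ d) :
    stepD d (StC d i k) k = StC d i (k+1) := by
  have hk1 : k ≤ d+1 := by omega
  ext G
  simp only [stepD, sdC, Set.mem_union]
  constructor
  · rintro (⟨⟨ε, x, hε1, hε2, hx, hsub⟩, hnF⟩ | ⟨a, ha, bg, ⟨b, hb, g, ⟨hgd, hgm⟩, rfl⟩, rfl⟩)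
    · rw [mem_Icc] at hx
      have hpat : patF d k (setAt k false ε) = patF d k ε :=
        patF_congr fun j hj => setAt_ne _ _ (by omega)
      by_cases hxk : x = k
      · rw [hxk, remF_self] at hsub
        obtain ⟨y, hyF, hyG⟩ := Finset.not_subset.mp hnF
        obtain ⟨m, hm1, hm2, rfl⟩ := mem_Fsub_cases hyF
        refine ⟨setAt k false ε, m, ?_, ?_, by rw [mem_Icc]; omega, ?_⟩
        · intro j hj; rw [setAt_ne _ _ (by omega : j ≠ k)]; exact hε1 j hj
        · rw [setAt_ne _ _ (by omega : i ≠ k)]; exact hε2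
        · intro z hz
          rcases Finset.mem_union.mp (hsub hz) with hp | hr
          · apply Finset.mem_union_left
            rw [patF_succ_false (setAt_self _ _ _), hpat]
            exact Finset.mem_insert_of_mem hp
          · obtain ⟨m', hm'1, hm'2, rfl⟩ := mem_Fsub_cases hr
            have hne : m' ≠ m := by rintro rfl; exact hyG hz
            apply Finset.mem_union_right
            rw [origV_mem_remF (by omega)]
            exact ⟨hne, by omega, hm'2⟩
      · refine ⟨setAt k false ε, x, ?_, ?_, by rw [mem_Icc]; omega, ?_⟩
        · intro j hj; rw [setAt_ne _ _ (by omega : j ≠ k)]; exact hε1 j hj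
        · rw [setAt_ne _ _ (by omega : i ≠ k)]; exact hε2
        · intro z hz
          rcases Finset.mem_union.mp (hsub hz) with hp | hr
          · apply Finset.mem_union_left
            rw [patF_succ_false (setAt_self _ _ _), hpat]
            exact Finset.mem_insert_of_mem hp
          · rw [remF_step hk1 (by omega)] at hr
            rcases Finset.mem_insert.mp hr with rfl | hr'
            · apply Finset.mem_union_left
              rw [patF_succ_false (setAt_self _ _ _)]
              exact Finset.mem_insert_self _ _
            · exact Finset.mem_union_right _ hr'
    · have hb' : b ⊂ Fsub d k := hb
      obtain ⟨ε, x, hε1, hε2, hx, hsub⟩ := hgm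
      rw [mem_Icc] at hx
      have hxk : x = k := by
        by_contra hne
        have h1 : origV d x ∈ Fsub d k := (origV_mem_Fsub (by omega)).2 ⟨by omega, hx.2⟩
        rcases Finset.mem_union.mp (hsub (Finset.mem_union_left _ h1)) with hp | hr
        · rw [origV_mem_patF (by omega) hk1] at hp; omega
        · rw [origV_mem_remF (by omega)] at hr; exact hr.1 rfl
      rw [hxk, remF_self] at hsub
      have hgp : g ⊆ patF d k ε := by
        intro z hz
        rcases Finset.mem_union.mp (hsub (Finset.mem_union_right _ hz)) with hp | hr
        · exact hp
        · exact absurd hz (Finset.disjoint_left.mp hgd hr)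
      obtain ⟨y, hyF, hyb⟩ := Finset.exists_of_ssubset hb'
      obtain ⟨m, hm1, hm2, rfl⟩ := mem_Fsub_cases hyF
      have hpat : patF d k (setAt k true ε) = patF d k ε :=
        patF_congr fun j hj => setAt_ne _ _ (by omega)
      refine ⟨setAt k true ε, m, ?_, ?_, by rw [mem_Icc]; omega, ?_⟩
      · intro j hj; rw [setAt_ne _ _ (by omega : j ≠ k)]; exact hε1 j hj
      · rw [setAt_ne _ _ (by omega : i ≠ k)]; exact hε2
      · intro z hz
        rcases Finset.mem_union.mp hz with hza | hzbg
        · have hz' : z = newV d k := Finset.mem_singleton.mp (ha hza)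
          subst hz'
          apply Finset.mem_union_left
          rw [patF_succ_true (setAt_self _ _ _)]
          exact Finset.mem_insert_self _ _
        · rcases Finset.mem_union.mp hzbg with hzb | hzg
          · obtain ⟨m', hm'1, hm'2, rfl⟩ := mem_Fsub_cases (hb'.subset hzb)
            have hne : m' ≠ m := by rintro rfl; exact hyb hzb
            apply Finset.mem_union_right
            rw [origV_mem_remF (by omega)]
            exact ⟨hne, by omega, hm'2⟩
          · apply Finset.mem_union_left
            rw [patF_succ_true (setAt_self _ _ _), hpat]
            exact Finset.mem_insert_of_mem (hgp hzg)
  · rintro ⟨ε, x, hε1, hε2, hx, hsub⟩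
    rw [mem_Icc] at hx
    by_cases hc : ε k = true
    · right
      refine ⟨G ∩ {newV d k}, Finset.inter_subset_right,
        (G ∩ remF d (k+1) x) ∪ (G ∩ patF d k ε),
        ⟨G ∩ remF d (k+1) x, ?_, G ∩ patF d k ε, ⟨?_, ?_⟩, rfl⟩, ?_⟩
      · show G ∩ remF d (k+1) x ⊂ Fsub d k
        rw [Finset.ssubset_def]
        constructor
        · exact Finset.inter_subset_right.trans remF_subset_Fsub
        · intro hcon
          have h1 : origV d x ∈ Fsub d k := (origV_mem_Fsub (by omega)).2 ⟨by omega, hx.2⟩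
          have h2 := hcon h1
          rw [Finset.mem_inter, origV_mem_remF (by omega)] at h2
          exact h2.2.1 rfl
      · exact (disjoint_Fsub_patF hk1).mono_right Finset.inter_subset_right
      · refine ⟨ε, k, hε1, hε2, by rw [mem_Icc]; omega, ?_⟩
        apply Finset.union_subset
        · intro z hz
          apply Finset.mem_union_right
          rwa [remF_self]
        · intro z hz
          exact Finset.mem_union_left _ (Finset.mem_inter.mp hz).2
      · apply Finset.Subset.antisymm
        · intro z hz
          rcases Finset.mem_union.mp (hsub hz) with hp | hr
          · rw [patF_succ_true hc] at hp
            rcases Finset.mem_insert.mp hp with rfl | hp'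
            · exact Finset.mem_union_left _ (Finset.mem_inter.mpr ⟨hz, Finset.mem_singleton_self _⟩)
            · exact Finset.mem_union_right _
                (Finset.mem_union_right _ (Finset.mem_inter.mpr ⟨hz, hp'⟩))
          · exact Finset.mem_union_right _
              (Finset.mem_union_left _ (Finset.mem_inter.mpr ⟨hz, hr⟩))
        · exact Finset.union_subset Finset.inter_subset_left
            (Finset.union_subset Finset.inter_subset_left Finset.inter_subset_left)
    · left
      have hcf : ε k = false := by simpa using hc
      refine ⟨⟨ε, x, hε1, hε2, by rw [mem_Icc]; omega, ?_⟩, ?_⟩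
      · intro z hz
        rcases Finset.mem_union.mp (hsub hz) with hp | hr
        · rw [patF_succ_false hcf] at hp
          rcases Finset.mem_insert.mp hp with rfl | hp'
          · apply Finset.mem_union_right
            rw [origV_mem_remF (by omega)]
            exact ⟨by omega, le_rfl, by omega⟩
          · exact Finset.mem_union_left _ hp'
        · apply Finset.mem_union_right
          rw [remF_step hk1 (by omega)]
          exact Finset.mem_insert_of_mem hr
      · rw [Finset.not_subset]
        refine ⟨origV d x, (origV_mem_Fsub (by omega)).2 ⟨by omega, hx.2⟩, ?_⟩
        intro hcon
        rcases Finset.mem_union.mp (hsub hcon) with hp | hr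
        · rw [origV_mem_patF (by omega) (by omega)] at hp; omega
        · rw [origV_mem_remF (by omega)] at hr; exact hr.1 rfl

/-! #### Folding the subdivisions -/

lemma foldl_range_succ {α : Type*} (f : α → ℕ → α) (b : α) (n : ℕ) :
    (List.range (n+1)).foldl f b = f ((List.range n).foldl f b) n := by
  rw [List.range_succ, List.foldl_append, List.foldl_cons, List.foldl_nil]

lemma fold_Gamma_le {i : ℕ} (hi : i ≤ d+1) :
    ∀ k, k ≤ i → (List.range k).foldl (stepD d) (GammaC d i) = GammaC d i := by
  intro k
  induction k with
  | zero => intro _; rfl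
  | succ n ih =>
    intro h
    rw [foldl_range_succ, ih (by omega)]
    exact step_Gamma_lt (by omega) hi

lemma fold_Gamma_gt {i : ℕ} (hi : i ≤ d) :
    ∀ k, i < k → k ≤ d+1 → (List.range k).foldl (stepD d) (GammaC d i) = StC d i k := by
  intro k
  induction k with
  | zero => omega
  | succ n ih =>
    intro h1 h2
    by_cases hn : i < n
    · rw [foldl_range_succ, ih hn (by omega), step_StC hn (by omega)]
    · have hni : n = i := by omega
      subst hni
      rw [foldl_range_succ, fold_Gamma_le (by omega) n le_rfl, step_Gamma_eq hi]

/-! #### The final description of `Diam` on one `Γ_i` -/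

def EFt (d : ℕ) (ε : ℕ → Bool) : Finset (V d) := patF d (d+1) ε

def Ppred (d i : ℕ) (ε : ℕ → Bool) : Prop :=
  (∀ j < i, ε j = false) ∧ (i ≤ d → ε i = true)

def DS (d i : ℕ) : Set (Finset (V d)) := {F | ∃ ε, Ppred d i ε ∧ F ⊆ EFt d ε}

lemma remF_top : remF d (d+1) (d+1) = ∅ := by
  unfold remF
  rw [Finset.Icc_self, Finset.erase_singleton, Finset.image_empty]

lemma StC_top {i : ℕ} (hi : i ≤ d) : StC d i (d+1) = DS d i := by
  ext G
  constructor
  · rintro ⟨ε, x, h1, h2, hx, hsub⟩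
    rw [mem_Icc] at hx
    have hxx : x = d+1 := by omega
    subst hxx
    refine ⟨ε, ⟨h1, fun _ => h2⟩, ?_⟩
    rw [remF_top] at hsub
    simpa [EFt] using hsub
  · rintro ⟨ε, ⟨h1, h2⟩, hsub⟩
    refine ⟨ε, d+1, h1, h2 hi, by rw [mem_Icc]; omega, ?_⟩
    rw [remF_top]
    simpa [EFt] using hsub

lemma Diam_Gamma {i : ℕ} (hi : i ≤ d+1) : Diam d (GammaC d i) = DS d i := by
  rcases Nat.lt_or_ge i (d+1) with h | h
  · rw [Diam_eq_fold, fold_Gamma_gt (by omega) (d+1) (by omega) le_rfl, StC_top (by omega)]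
  · have hieq : i = d+1 := by omega
    subst hieq
    rw [Diam_eq_fold, fold_Gamma_le le_rfl (d+1) le_rfl]
    ext G
    constructor
    · intro hG
      have hG' : G ⊆ Gface d (d+1) := hG
      refine ⟨fun _ => false, ⟨fun _ _ => rfl, fun h' => absurd h' (by omega)⟩, ?_⟩
      intro z hz
      obtain ⟨m, hm1, hm2, rfl⟩ := mem_Gface_cases (hG' hz)
      show origV d m ∈ patF d (d+1) _
      rw [origV_mem_patF (by omega) (by omega)]
      exact ⟨by omega, rfl⟩
    · rintro ⟨ε, ⟨h1, _⟩, hsub⟩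
      intro z hz
      have hz' : z ∈ patF d (d+1) ε := hsub hz
      obtain ⟨j, hj, hc⟩ := mem_patF_cases hz'
      rcases hc with ⟨ht, rfl⟩ | ⟨_, rfl⟩
      · rw [h1 j (by omega)] at ht; cases ht
      · exact (origV_mem_Gface (by omega)).2 (by omega)

/-! #### Unions -/

lemma sdC_iUnion {W : Type*} [DecidableEq W] {ι : Sort*} (v : W) (F : Finset W)
    (A : ι → Set (Finset W)) :
    sdC v F (⋃ i, A i) = ⋃ i, sdC v F (A i) := by
  ext G
  simp only [sdC, delFace, joinC, lkC, simplexOn, bdrySimplex, Set.mem_union,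
    Set.mem_setOf_eq, Set.mem_iUnion]
  constructor
  · rintro (⟨⟨i, hi⟩, hn⟩ | ⟨a, ha, bg, ⟨b, hb, g, ⟨hgd, ⟨i, hi⟩⟩, rfl⟩, rfl⟩)
    · exact ⟨i, Or.inl ⟨hi, hn⟩⟩
    · exact ⟨i, Or.inr ⟨a, ha, _, ⟨b, hb, g, ⟨hgd, hi⟩, rfl⟩, rfl⟩⟩
  · rintro ⟨i, (⟨hi, hn⟩ | ⟨a, ha, bg, ⟨b, hb, g, ⟨hgd, hi⟩, rfl⟩, rfl⟩)⟩
    · exact Or.inl ⟨⟨i, hi⟩, hn⟩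
    · exact Or.inr ⟨a, ha, _, ⟨b, hb, g, ⟨hgd, ⟨i, hi⟩⟩, rfl⟩, rfl⟩

lemma foldl_step_iUnion {ι : Sort*} (L : List ℕ) (A : ι → Set (Finset (V d))) :
    L.foldl (stepD d) (⋃ i, A i) = ⋃ i, L.foldl (stepD d) (A i) := by
  induction L generalizing A with
  | nil => rfl
  | cons a l ih =>
    simp only [List.foldl_cons]
    rw [show stepD d (⋃ i, A i) a = ⋃ i, stepD d (A i) a from sdC_iUnion _ _ _]
    exact ih (fun i => stepD d (A i) a)

lemma GammaU_eq_iUnion (I : Finset ℕ) : GammaU d I = ⋃ i : I, GammaC d (i : ℕ) := by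
  ext G
  simp only [GammaU, Set.mem_setOf_eq, Set.mem_iUnion]
  constructor
  · rintro ⟨i, hi, h⟩
    exact ⟨⟨i, hi⟩, h⟩
  · rintro ⟨⟨i, hi⟩, h⟩
    exact ⟨i, hi, h⟩

lemma mem_DiamU {I : Finset ℕ} (hI : I ⊆ Finset.range (d+2)) {F : Finset (V d)} :
    F ∈ DiamU d I ↔ ∃ ε, (∃ i ∈ I, Ppred d i ε) ∧ F ⊆ EFt d ε := by
  have hDU : DiamU d I = ⋃ i : I, Diam d (GammaC d (i : ℕ)) := by
    show Diam d (GammaU d I) = _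
    rw [GammaU_eq_iUnion, Diam_eq_fold, foldl_step_iUnion]
    rfl
  rw [hDU]
  simp only [Set.mem_iUnion]
  constructor
  · rintro ⟨j, h⟩
    have hj := Finset.mem_range.mp (hI j.2)
    rw [Diam_Gamma (by omega)] at h
    obtain ⟨ε, hP, hsub⟩ := h
    exact ⟨ε, ⟨j, j.2, hP⟩, hsub⟩
  · rintro ⟨ε, ⟨i, hi, hP⟩, hsub⟩
    refine ⟨⟨i, hi⟩, ?_⟩
    have hj := Finset.mem_range.mp (hI hi)
    show F ∈ Diam d (GammaC d i)
    rw [Diam_Gamma (by omega)]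
    exact ⟨ε, hP, hsub⟩

/-! #### Isomorphism lemmas -/

lemma isoC_refl (Δ : Set (Finset W)) : IsoC Δ Δ :=
  ⟨Equiv.refl W, fun F => by simp⟩

lemma isoC_symm {Δ Γ : Set (Finset W)} (h : IsoC Δ Γ) : IsoC Γ Δ := by
  obtain ⟨e, he⟩ := h
  refine ⟨e.symm, fun F => ?_⟩
  have h1 := he (F.image ⇑e.symm)
  rw [Finset.image_image, Equiv.self_comp_symm, Finset.image_id] at h1
  exact h1.symm

lemma isoC_trans {Δ Γ Ω : Set (Finset W)} (h1 : IsoC Δ Γ) (h2 : IsoC Γ Ω) : IsoC Δ Ω := by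
  obtain ⟨e, he⟩ := h1
  obtain ⟨f, hf⟩ := h2
  refine ⟨e.trans f, fun F => ?_⟩
  rw [he F, hf (F.image ⇑e), Finset.image_image, Equiv.coe_trans]

def flipAt (l : ℕ) (ε : ℕ → Bool) : ℕ → Bool := fun j => if j = l then !(ε j) else ε j

lemma flipAt_ne {l j : ℕ} (ε : ℕ → Bool) (h : j ≠ l) : flipAt l ε j = ε j := if_neg h

lemma flipAt_self (l : ℕ) (ε : ℕ → Bool) : flipAt l ε l = !(ε l) := if_pos rfl

lemma flipAt_flipAt (l : ℕ) (ε : ℕ → Bool) : flipAt l (flipAt l ε) = ε := by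
  funext j
  by_cases h : j = l <;> simp [flipAt, h]

lemma EFt_image_swap {l : ℕ} (hl : l ≤ d) (ε : ℕ → Bool) :
    (EFt d ε).image (Equiv.swap (origV d l) (newV d l)) = EFt d (flipAt l ε) := by
  unfold EFt patF
  rw [Finset.image_image]
  apply Finset.image_congr
  intro j hj
  simp only [coe_range, Set.mem_Iio] at hj
  simp only [Function.comp_apply]
  by_cases h : j = l
  · subst h
    cases hε : ε j
    · simp [flipAt, hε, Equiv.swap_apply_left]
    · simp [flipAt, hε, Equiv.swap_apply_right]
  · have h1 : origV d j ≠ origV d l := fun hc => h (origV_inj (by omega) (by omega) hc)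
    have h2 : origV d j ≠ newV d l := origV_ne_newV j l
    have h3 : newV d j ≠ origV d l := (origV_ne_newV l j).symm
    have h4 : newV d j ≠ newV d l := fun hc => h (newV_inj (by omega) (by omega) hc)
    cases hε : ε j
    · simp [flipAt, hε, h, Equiv.swap_apply_of_ne_of_ne h1 h2]
    · simp [flipAt, hε, h, Equiv.swap_apply_of_ne_of_ne h3 h4]

lemma cond_transfer {I : Finset ℕ} {l : ℕ} (hl : l ≤ d) (hlI : l ∉ I)
    (hd1 : d+1 ∈ I) (htail : ∀ m, l < m → m ≤ d+1 → m ∈ I)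
    (hI : I ⊆ Finset.range (d+2)) (ε : ℕ → Bool) :
    (∃ i ∈ I, Ppred d i ε) ↔ ∃ i ∈ insert l (I.filter (· < l)), Ppred d i (flipAt l ε) := by
  constructor
  · rintro ⟨i, hiI, h1, h2⟩
    have hid : i < d+2 := mem_range.mp (hI hiI)
    rcases lt_trichotomy i l with hil | rfl | hli
    · refine ⟨i, Finset.mem_insert_of_mem (Finset.mem_filter.mpr ⟨hiI, hil⟩), ?_, ?_⟩
      · intro j hj; rw [flipAt_ne _ (by omega)]; exact h1 j hj
      · intro hi; rw [flipAt_ne _ (by omega)]; exact h2 hi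
    · exact absurd hiI hlI
    · refine ⟨l, Finset.mem_insert_self _ _, ?_, ?_⟩
      · intro j hj; rw [flipAt_ne _ (by omega)]; exact h1 j (by omega)
      · intro _; rw [flipAt_self, h1 l hli]; rfl
  · rintro ⟨i, hiJ, h1, h2⟩
    rcases Finset.mem_insert.mp hiJ with rfl | hif
    · have hε1 : ∀ j < i, ε j = false := by
        intro j hj
        have hh := h1 j hj
        rwa [flipAt_ne _ (by omega)] at hh
      have hεl : ε i = false := by
        have hh := h2 hl
        rw [flipAt_self] at hh
        cases hv : ε i
        · rfl
        · rw [hv] at hh; simp at hh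
      by_cases hSne : ((Finset.Ioc i d).filter (fun j => ε j = true)).Nonempty
      · set m := ((Finset.Ioc i d).filter (fun j => ε j = true)).min' hSne with hm
        have hmS := Finset.min'_mem _ hSne
        rw [← hm, Finset.mem_filter, Finset.mem_Ioc] at hmS
        refine ⟨m, htail m hmS.1.1 (by omega), ?_, fun _ => hmS.2⟩
        intro j hj
        rcases lt_trichotomy j i with h' | h' | h'
        · exact hε1 j h'
        · exact h' ▸ hεl
        · by_contra hcon
          have hjt : ε j = true := by
            cases hv : ε j
            · exact absurd hv hcon
            · rfl
          have hjS : j ∈ (Finset.Ioc i d).filter (fun j => ε j = true) := by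
            rw [Finset.mem_filter, Finset.mem_Ioc]
            exact ⟨⟨h', by omega⟩, hjt⟩
          have := Finset.min'_le _ j hjS
          omega
      · refine ⟨d+1, hd1, ?_, fun h' => absurd h' (by omega)⟩
        intro j hj
        rcases lt_trichotomy j i with h' | h' | h'
        · exact hε1 j h'
        · exact h' ▸ hεl
        · cases hv : ε j
          · rfl
          · exfalso
            apply hSne
            refine ⟨j, ?_⟩
            rw [Finset.mem_filter, Finset.mem_Ioc]
            exact ⟨⟨h', by omega⟩, hv⟩
    · rw [Finset.mem_filter] at hif
      refine ⟨i, hif.1, ?_, ?_⟩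
      · intro j hj
        have hh := h1 j hj
        rwa [flipAt_ne _ (by omega)] at hh
      · intro hi
        have hh := h2 hi
        rwa [flipAt_ne _ (by omega)] at hh

lemma iso_reduce {I : Finset ℕ} (hI : I ⊆ Finset.range (d+2)) (hd1 : d+1 ∈ I)
    {l : ℕ} (hl : l ≤ d) (hlI : l ∉ I) (htail : ∀ m, l < m → m ≤ d+1 → m ∈ I) :
    IsoC (DiamU d I) (DiamU d (insert l (I.filter (· < l)))) := by
  have hJ : insert l (I.filter (· < l)) ⊆ Finset.range (d+2) := by
    intro x hx
    rcases Finset.mem_insert.mp hx with rfl | hx'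
    · rw [mem_range]; omega
    · exact hI (Finset.mem_filter.mp hx').1
  refine ⟨Equiv.swap (origV d l) (newV d l), fun F => ?_⟩
  rw [mem_DiamU hI, mem_DiamU hJ]
  constructor
  · rintro ⟨ε, hc, hsub⟩
    refine ⟨flipAt l ε, (cond_transfer hl hlI hd1 htail hI ε).mp hc, ?_⟩
    rw [← EFt_image_swap hl]
    exact Finset.image_subset_image hsub
  · rintro ⟨ε', hc, hsub⟩
    refine ⟨flipAt l ε', ?_, ?_⟩
    · have h1 := (cond_transfer hl hlI hd1 htail hI (flipAt l ε'))
      rw [flipAt_flipAt] at h1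
      exact h1.mpr hc
    · have h2 : (EFt d (flipAt l ε')).image (Equiv.swap (origV d l) (newV d l)) = EFt d ε' := by
        rw [EFt_image_swap hl, flipAt_flipAt]
      rw [← h2] at hsub
      exact (Finset.image_subset_image_iff (Equiv.injective _)).mp hsub

lemma reduce_exists {I : Finset ℕ} (hI : I ⊆ Finset.range (d+2)) (hne : I.Nonempty)
    (hfull : I ≠ Finset.range (d+2)) :
    ∃ J, J ⊆ Finset.range (d+1) ∧ J.Nonempty ∧ IsoC (DiamU d I) (DiamU d J) := by
  by_cases hd1 : d+1 ∈ I
  · have hCne : ((Finset.range (d+2)).filter (fun m => m ∉ I)).Nonempty := by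
      by_contra hcon
      rw [Finset.not_nonempty_iff_eq_empty, Finset.filter_eq_empty_iff] at hcon
      apply hfull
      apply Finset.Subset.antisymm hI
      intro m hm
      by_contra hmI
      exact (hcon hm) hmI
    set l := ((Finset.range (d+2)).filter (fun m => m ∉ I)).max' hCne with hldef
    have hlmem := Finset.max'_mem _ hCne
    rw [← hldef, Finset.mem_filter, Finset.mem_range] at hlmem
    have hlI : l ∉ I := hlmem.2
    have hld : l ≤ d := by
      have : l ≠ d+1 := fun h => hlI (h ▸ hd1)
      omega
    have htail : ∀ m, l < m → m ≤ d+1 → m ∈ I := by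
      intro m hm1 hm2
      by_contra hmI
      have hmmem : m ∈ (Finset.range (d+2)).filter (fun m => m ∉ I) :=
        Finset.mem_filter.mpr ⟨Finset.mem_range.mpr (by omega), hmI⟩
      have := Finset.le_max' _ m hmmem
      omega
    refine ⟨insert l (I.filter (· < l)), ?_, ⟨l, Finset.mem_insert_self _ _⟩,
      iso_reduce hI hd1 hld hlI htail⟩
    intro x hx
    rcases Finset.mem_insert.mp hx with rfl | hx'
    · rw [Finset.mem_range]; omega
    · have := (Finset.mem_filter.mp hx').2
      rw [Finset.mem_range]
      omega
  · refine ⟨I, ?_, hne, isoC_refl _⟩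
    intro x hx
    have h1 := Finset.mem_range.mp (hI hx)
    have h2 : x ≠ d+1 := fun h => hd1 (h ▸ hx)
    rw [Finset.mem_range]
    omega

end Stmt3Aux

section Stmt3Count

open Finset

variable {d : ℕ}

lemma EFt_card (ε : ℕ → Bool) : (EFt d ε).card = d+1 := by
  unfold EFt patF
  have hinj : Set.InjOn (fun j => if ε j then newV d j else origV d j)
      ↑(Finset.range (d+1)) := by
    intro a ha b hb hab
    simp only [coe_range, Set.mem_Iio] at ha hb
    by_cases h1 : ε a = true <;> by_cases h2 : ε b = true
    · simp only [if_pos h1, if_pos h2] at hab; exact newV_inj (by omega) (by omega) hab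
    · simp only [if_pos h1, if_neg h2] at hab; exact absurd hab.symm (origV_ne_newV b a)
    · simp only [if_neg h1, if_pos h2] at hab; exact absurd hab (origV_ne_newV a b)
    · simp only [if_neg h1, if_neg h2] at hab; exact origV_inj (by omega) (by omega) hab
  rw [Finset.card_image_of_injOn hinj, Finset.card_range]

lemma newV_mem_EFt {a : ℕ} (ha : a ≤ d) (ε : ℕ → Bool) :
    newV d a ∈ EFt d ε ↔ ε a = true := by
  unfold EFt
  rw [newV_mem_patF (by omega) (by omega)]
  exact ⟨fun h => h.2, fun h => ⟨by omega, h⟩⟩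

def candE (d : ℕ) (J : Finset ℕ) : Finset (Finset ℕ) :=
  J.biUnion (fun i => ((Finset.Ioc i d).powerset).image (insert i))

lemma mem_cand_min {i : ℕ} {S : Finset ℕ}
    (h : S ∈ ((Finset.Ioc i d).powerset).image (insert i)) :
    i ∈ S ∧ (∀ j ∈ S, i ≤ j) ∧ (∀ j ∈ S, j ≤ d ∨ j = i) := by
  obtain ⟨T, hT, rfl⟩ := Finset.mem_image.mp h
  rw [Finset.mem_powerset] at hT
  refine ⟨Finset.mem_insert_self _ _, ?_, ?_⟩
  · intro j hj
    rcases Finset.mem_insert.mp hj with rfl | hj'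
    · exact le_rfl
    · have := hT hj'; rw [Finset.mem_Ioc] at this; omega
  · intro j hj
    rcases Finset.mem_insert.mp hj with rfl | hj'
    · exact Or.inr rfl
    · have := hT hj'; rw [Finset.mem_Ioc] at this; exact Or.inl this.2

lemma mem_candE_elim {J S : Finset ℕ} (hJ : J ⊆ Finset.range (d+1)) (h : S ∈ candE d J) :
    ∃ i ∈ J, i ∈ S ∧ (∀ j < i, j ∉ S) ∧ S ⊆ Finset.range (d+1) := by
  rw [candE, Finset.mem_biUnion] at h
  obtain ⟨i, hiJ, hS⟩ := h
  obtain ⟨hi1, hi2, hi3⟩ := mem_cand_min hS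
  have hid : i < d+1 := Finset.mem_range.mp (hJ hiJ)
  refine ⟨i, hiJ, hi1, ?_, ?_⟩
  · intro j hj hjS
    have := hi2 j hjS
    omega
  · intro j hj
    rcases hi3 j hj with h' | h'
    · rw [Finset.mem_range]; omega
    · rw [Finset.mem_range]; omega

lemma card_candE {J : Finset ℕ} (hJ : J ⊆ Finset.range (d+1)) :
    (candE d J).card = ∑ i ∈ J, 2^(d - i) := by
  unfold candE
  rw [Finset.card_biUnion]
  · apply Finset.sum_congr rfl
    intro i _
    have hinj : Set.InjOn (insert i) (((Finset.Ioc i d).powerset : Finset (Finset ℕ)) : Set (Finset ℕ)) := by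
      intro T hT U hU hTU
      rw [Finset.mem_coe, Finset.mem_powerset] at hT hU
      have hiT : i ∉ T := fun hc => by have := hT hc; rw [Finset.mem_Ioc] at this; omega
      have hiU : i ∉ U := fun hc => by have := hU hc; rw [Finset.mem_Ioc] at this; omega
      rw [← Finset.erase_insert hiT, ← Finset.erase_insert hiU, hTU]
    rw [Finset.card_image_of_injOn hinj, Finset.card_powerset, Nat.card_Ioc]
  · intro x hx y hy hxy
    rw [Function.onFun, Finset.disjoint_left]
    intro S hSx hSy
    obtain ⟨hx1, hx2, _⟩ := mem_cand_min hSx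
    obtain ⟨hy1, hy2, _⟩ := mem_cand_min hSy
    exact hxy (le_antisymm (hx2 y hy1) (hy2 x hx1))

def faceSet (d : ℕ) (J : Finset ℕ) : Finset (Finset (V d)) :=
  (candE d J).image (fun S => EFt d (fun j => decide (j ∈ S)))

lemma mem_faceSet {J : Finset ℕ} (hJ : J ⊆ Finset.range (d+1)) {F : Finset (V d)} :
    F ∈ faceSet d J ↔ F ∈ DiamU d J ∧ F.card = d+1 := by
  have hJ2 : J ⊆ Finset.range (d+2) := fun x hx => by
    have := Finset.mem_range.mp (hJ hx); rw [Finset.mem_range]; omega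
  constructor
  · intro h
    unfold faceSet at h
    obtain ⟨S, hS, rfl⟩ := Finset.mem_image.mp h
    obtain ⟨i, hiJ, hi1, hi2, _⟩ := mem_candE_elim hJ hS
    constructor
    · rw [mem_DiamU hJ2]
      refine ⟨fun j => decide (j ∈ S), ⟨i, hiJ, ?_, ?_⟩, le_rfl⟩
      · intro j hj
        exact decide_eq_false (hi2 j hj)
      · intro _
        exact decide_eq_true hi1
    · exact EFt_card _
  · rintro ⟨hmem, hcard⟩
    rw [mem_DiamU hJ2] at hmem
    obtain ⟨ε, ⟨i, hiJ, hP1, hP2⟩, hsub⟩ := hmem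
    have hid : i < d+1 := Finset.mem_range.mp (hJ hiJ)
    have hFeq : F = EFt d ε := by
      apply Finset.eq_of_subset_of_card_le hsub
      rw [EFt_card, hcard]
    set S := (Finset.range (d+1)).filter (fun j => ε j = true) with hSdef
    have hiS : i ∈ S := by
      rw [hSdef, Finset.mem_filter, Finset.mem_range]
      exact ⟨hid, hP2 (by omega)⟩
    have hScand : S ∈ candE d J := by
      rw [candE, Finset.mem_biUnion]
      refine ⟨i, hiJ, ?_⟩
      rw [Finset.mem_image]
      refine ⟨S.erase i, ?_, Finset.insert_erase hiS⟩
      rw [Finset.mem_powerset]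
      intro j hj
      rw [Finset.mem_erase] at hj
      have hjS := hj.2
      rw [hSdef, Finset.mem_filter, Finset.mem_range] at hjS
      rw [Finset.mem_Ioc]
      have : ¬ j < i := fun hc => by rw [hP1 j hc] at hjS; simp at hjS
      omega
    unfold faceSet
    rw [Finset.mem_image]
    refine ⟨S, hScand, ?_⟩
    show EFt d (fun j => decide (j ∈ S)) = F
    rw [hFeq]
    unfold EFt
    apply patF_congr
    intro j hj
    show decide (j ∈ S) = ε j
    cases hv : ε j
    · apply decide_eq_false
      rw [hSdef, Finset.mem_filter]
      rintro ⟨-, hc⟩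
      rw [hv] at hc
      simp at hc
    · apply decide_eq_true
      rw [hSdef, Finset.mem_filter, Finset.mem_range]
      exact ⟨hj, hv⟩

lemma card_faceSet {J : Finset ℕ} (hJ : J ⊆ Finset.range (d+1)) :
    (faceSet d J).card = ∑ i ∈ J, 2^(d - i) := by
  unfold faceSet
  rw [← card_candE hJ]
  apply Finset.card_image_of_injOn
  intro S hS S' hS' heq
  rw [Finset.mem_coe] at hS hS'
  obtain ⟨_, _, _, _, hSsub⟩ := mem_candE_elim hJ hS
  obtain ⟨_, _, _, _, hS'sub⟩ := mem_candE_elim hJ hS'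
  ext j
  by_cases hj : j ≤ d
  · have heq' : EFt d (fun j => decide (j ∈ S)) = EFt d (fun j => decide (j ∈ S')) := heq
    have h1 := newV_mem_EFt hj (fun j => decide (j ∈ S))
    have h2 := newV_mem_EFt hj (fun j => decide (j ∈ S'))
    rw [heq'] at h1
    rw [h2] at h1
    constructor
    · intro h; exact of_decide_eq_true (h1.mpr (decide_eq_true h))
    · intro h; exact of_decide_eq_true (h1.mp (decide_eq_true h))
  · constructor
    · intro h; have := Finset.mem_range.mp (hSsub h); omega
    · intro h; have := Finset.mem_range.mp (hS'sub h); omega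

lemma sum_range_two_pow (n : ℕ) : ∑ i ∈ Finset.range n, 2^i = 2^n - 1 := by
  induction n with
  | zero => simp
  | succ n ih =>
    rw [Finset.sum_range_succ, ih]
    have h1 : 1 ≤ 2^n := Nat.one_le_two_pow
    have h2 : 2^(n+1) = 2^n + 2^n := by rw [pow_succ]; ring
    omega

lemma sum_two_pow_inj : ∀ n (s t : Finset ℕ), s ⊆ Finset.range n → t ⊆ Finset.range n →
    ∑ i ∈ s, 2^i = ∑ i ∈ t, 2^i → s = t := by
  intro n
  induction n with
  | zero =>
    intro s t hs ht _
    rw [Finset.range_zero, Finset.subset_empty] at hs ht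
    rw [hs, ht]
  | succ n ih =>
    intro s t hs ht hsum
    have hbound : ∀ u : Finset ℕ, u ⊆ Finset.range n → ∑ i ∈ u, 2^i < 2^n := by
      intro u hu
      calc ∑ i ∈ u, 2^i ≤ ∑ i ∈ Finset.range n, 2^i := Finset.sum_le_sum_of_subset hu
      _ < 2^n := by
        rw [sum_range_two_pow]
        have : 1 ≤ 2^n := Nat.one_le_two_pow
        omega
    have herase : ∀ u : Finset ℕ, u ⊆ Finset.range (n+1) → u.erase n ⊆ Finset.range n := by
      intro u hu j hj
      rw [Finset.mem_erase] at hj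
      have := Finset.mem_range.mp (hu hj.2)
      rw [Finset.mem_range]
      omega
    have hdrop : ∀ u : Finset ℕ, u ⊆ Finset.range (n+1) → n ∉ u → u ⊆ Finset.range n := by
      intro u hu hn j hj
      have := Finset.mem_range.mp (hu hj)
      have : j ≠ n := fun h => hn (h ▸ hj)
      rw [Finset.mem_range]
      omega
    by_cases hns : n ∈ s <;> by_cases hnt : n ∈ t
    · have h1 : ∑ i ∈ s.erase n, 2^i + 2^n = ∑ i ∈ s, 2^i := Finset.sum_erase_add _ _ hns
      have h2 : ∑ i ∈ t.erase n, 2^i + 2^n = ∑ i ∈ t, 2^i := Finset.sum_erase_add _ _ hnt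
      have h3 := ih (s.erase n) (t.erase n) (herase s hs) (herase t ht) (by omega)
      rw [← Finset.insert_erase hns, ← Finset.insert_erase hnt, h3]
    · exfalso
      have h1 : 2^n ≤ ∑ i ∈ s, 2^i :=
        Finset.single_le_sum (f := fun i => 2^i) (fun i _ => Nat.zero_le _) hns
      have h2 := hbound t (hdrop t ht hnt)
      omega
    · exfalso
      have h1 : 2^n ≤ ∑ i ∈ t, 2^i :=
        Finset.single_le_sum (f := fun i => 2^i) (fun i _ => Nat.zero_le _) hnt
      have h2 := hbound s (hdrop s hs hns)
      omega
    · exact ih s t (hdrop s hs hns) (hdrop t ht hnt) hsum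

lemma part3_lemma {J J' : Finset ℕ} (hJ : J ⊆ Finset.range (d+1))
    (hJ' : J' ⊆ Finset.range (d+1)) (h : IsoC (DiamU d J) (DiamU d J')) : J = J' := by
  obtain ⟨e, he⟩ := h
  have him : (faceSet d J).image (Finset.image ⇑e) = faceSet d J' := by
    apply Finset.Subset.antisymm
    · intro G hG
      obtain ⟨F, hF, rfl⟩ := Finset.mem_image.mp hG
      rw [mem_faceSet hJ] at hF
      rw [mem_faceSet hJ']
      exact ⟨(he F).mp hF.1, by rw [Finset.card_image_of_injective _ e.injective]; exact hF.2⟩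
    · intro G hG
      rw [mem_faceSet hJ'] at hG
      have hGG : (G.image ⇑e.symm).image ⇑e = G := by
        rw [Finset.image_image, Equiv.self_comp_symm, Finset.image_id]
      refine Finset.mem_image.mpr ⟨G.image ⇑e.symm, ?_, hGG⟩
      rw [mem_faceSet hJ]
      constructor
      · exact (he (G.image ⇑e.symm)).mpr (by rw [hGG]; exact hG.1)
      · rw [Finset.card_image_of_injective _ e.symm.injective]
        exact hG.2
  have hcards : (faceSet d J).card = (faceSet d J').card := by
    rw [← him, Finset.card_image_of_injective _ (Finset.image_injective e.injective)]
  rw [card_faceSet hJ, card_faceSet hJ'] at hcards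
  have hsubim : ∀ K : Finset ℕ, K ⊆ Finset.range (d+1) →
      K.image (fun i => d - i) ⊆ Finset.range (d+1) := by
    intro K hK j hj
    obtain ⟨i, _, rfl⟩ := Finset.mem_image.mp hj
    rw [Finset.mem_range]
    omega
  have hinj : ∀ K : Finset ℕ, K ⊆ Finset.range (d+1) →
      ∀ x ∈ K, ∀ y ∈ K, d - x = d - y → x = y := by
    intro K hK x hx y hy hxy
    have h1 := Finset.mem_range.mp (hK hx)
    have h2 := Finset.mem_range.mp (hK hy)
    omega
  have hsum2 : ∑ k ∈ J.image (fun i => d - i), 2^k = ∑ k ∈ J'.image (fun i => d - i), 2^k := by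
    rw [Finset.sum_image (hinj J hJ), Finset.sum_image (hinj J' hJ')]
    exact hcards
  have him2 := sum_two_pow_inj (d+1) _ _ (hsubim J hJ) (hsubim J' hJ') hsum2
  ext i
  constructor
  · intro hi
    have hid := Finset.mem_range.mp (hJ hi)
    have : d - i ∈ J'.image (fun i => d - i) := by
      rw [← him2]
      exact Finset.mem_image_of_mem _ hi
    obtain ⟨i', hi', heq⟩ := Finset.mem_image.mp this
    have hid' := Finset.mem_range.mp (hJ' hi')
    have : i' = i := by omega
    exact this ▸ hi'
  · intro hi
    have hid := Finset.mem_range.mp (hJ' hi)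
    have : d - i ∈ J.image (fun i => d - i) := by
      rw [him2]
      exact Finset.mem_image_of_mem _ hi
    obtain ⟨i', hi', heq⟩ := Finset.mem_image.mp this
    have hid' := Finset.mem_range.mp (hJ hi')
    have : i' = i := by omega
    exact this ▸ hi'

/-! #### The quotient count -/

def SubI (d : ℕ) := {I : Finset ℕ // I ⊆ Finset.range (d+2) ∧ I.Nonempty ∧ I ≠ Finset.range (d+2)}

def relI (d : ℕ) : SubI d → SubI d → Prop := fun I J => IsoC (DiamU d I.1) (DiamU d J.1)

lemma mem_SubI {J : Finset ℕ} (h1 : J ⊆ Finset.range (d+1)) (h2 : J.Nonempty) :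
    J ⊆ Finset.range (d+2) ∧ J.Nonempty ∧ J ≠ Finset.range (d+2) := by
  refine ⟨fun x hx => ?_, h2, fun hc => ?_⟩
  · have := Finset.mem_range.mp (h1 hx)
    rw [Finset.mem_range]
    omega
  · have hd : d+1 ∈ Finset.range (d+2) := by rw [Finset.mem_range]; omega
    rw [← hc] at hd
    have := Finset.mem_range.mp (h1 hd)
    omega

lemma card_quot (d : ℕ) : Nat.card (Quot (relI d)) = 2^(d+1) - 1 := by
  classical
  let T := {J : Finset ℕ // J ⊆ Finset.range (d+1) ∧ J.Nonempty}
  let g : T → Quot (relI d) := fun J => Quot.mk _ ⟨J.1, mem_SubI J.2.1 J.2.2⟩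
  have hbij : Function.Bijective g := by
    constructor
    · intro a b hab
      have hEq := Quot.eq.mp hab
      have key : ∀ x y : SubI d, Relation.EqvGen (relI d) x y →
          IsoC (DiamU d x.1) (DiamU d y.1) := by
        intro x y h
        induction h with
        | rel _ _ h => exact h
        | refl _ => exact isoC_refl _
        | symm _ _ _ ih => exact isoC_symm ih
        | trans _ _ _ _ _ ih1 ih2 => exact isoC_trans ih1 ih2
      have hiso := key _ _ hEq
      exact Subtype.ext (part3_lemma a.2.1 b.2.1 hiso)
    · intro q
      induction q using Quot.ind with
      | _ I =>
        obtain ⟨J, hJ1, hJ2, hIso⟩ := reduce_exists I.2.1 I.2.2.1 I.2.2.2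
        exact ⟨⟨J, hJ1, hJ2⟩, Quot.sound (isoC_symm hIso)⟩
  rw [← Nat.card_eq_of_bijective g hbij]
  have e1 : T ≃ {x // x ∈ ((Finset.range (d+1)).powerset.erase ∅)} :=
    Equiv.subtypeEquivRight (by
      intro J
      rw [Finset.mem_erase, Finset.mem_powerset, Finset.nonempty_iff_ne_empty]
      tauto)
  rw [Nat.card_congr e1, Nat.card_eq_finsetCard,
    Finset.card_erase_of_mem (Finset.mem_powerset.mpr (Finset.empty_subset _)),
    Finset.card_powerset, Finset.card_range]

end Stmt3Count


/-- there are exactly `2^{d+1}-1` combinatorially distinct basic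
cross-flips in dimension `d`: the isomorphism classes of the complexes
`⋄(Γ_I)`, `∅ ≠ I ⊊ {0,…,d+1}`, are in bijection with the nonempty subsets of
`{0,…,d}`. -/
theorem stmt3 (d : ℕ) :
    Nat.card (Quot (fun I J :
        {I : Finset ℕ // I ⊆ Finset.range (d+2) ∧ I.Nonempty ∧ I ≠ Finset.range (d+2)} =>
        IsoC (DiamU d I.1) (DiamU d J.1))) = 2^(d+1) - 1 ∧
    (∀ I : Finset ℕ, I ⊆ Finset.range (d+2) → I.Nonempty → I ≠ Finset.range (d+2) →
      ∃ J : Finset ℕ, J ⊆ Finset.range (d+1) ∧ J.Nonempty ∧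
        IsoC (DiamU d I) (DiamU d J)) ∧
    (∀ J J' : Finset ℕ, J ⊆ Finset.range (d+1) → J' ⊆ Finset.range (d+1) →
      J.Nonempty → J'.Nonempty → IsoC (DiamU d J) (DiamU d J') → J = J') := by
  refine ⟨card_quot d, fun I h1 h2 h3 => reduce_exists h1 h2 h3,
    fun J J' h1 h2 _ _ h5 => part3_lemma h1 h2 h5⟩

end Paper
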